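/- Define Θ : ℝ → ℝ by Θ(t) = 1 if t > 0 and Θ(t) = 0 if t ≤ 0. For all functions f_R, f_S, f_T : ℝ → ℝ and all (e₀, e₁, e₂) ∈ ℝ³, there exists a unique triple (x, y, z) ∈ ℝ³ such that x = f_R(Θ(−y)Θ(z) + e₀), y = f_S(Θ(−z)Θ(x) + e₁), and z = f_T(Θ(−x)Θ(y) + e₂). -/

import Mathlib

/-- The Heaviside step function: `Θ t = 1` for `t > 0` and `Θ t = 0` for `t ≤ 0`. -/
noncomputable def Θ (t : ℝ) : ℝ := if 0 < t then 1 else 0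

/-- Indicator of a boolean as a real number. -/
noncomputable def toB (b : Bool) : ℝ := if b then 1 else 0

/-- Three-valued sign of a real: 0 for negative, 1 for zero, 2 for positive. -/
noncomputable def mysign (x : ℝ) : Fin 3 := if x < 0 then 0 else if 0 < x then 2 else 1

lemma mysign_eq_zero (x : ℝ) : decide (mysign x = 0) = decide (x < 0) := by
  rw [decide_eq_decide]; unfold mysign; split_ifs with h1 h2
  · exact iff_of_true rfl h1
  · exact iff_of_false (by decide) h1
  · exact iff_of_false (by decide) h1

lemma mysign_eq_two (x : ℝ) : decide (mysign x = 2) = decide (0 < x) := by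
  rw [decide_eq_decide]; unfold mysign; split_ifs with h1 h2
  · exact iff_of_false (by decide) (by linarith)
  · exact iff_of_true rfl h2
  · exact iff_of_false (by decide) h2

lemma theta_mul (y z : ℝ) : Θ (-y) * Θ z = toB (decide (y < 0) && decide (0 < z)) := by
  simp only [Θ, toB, neg_pos]
  by_cases h1 : y < 0 <;> by_cases h2 : 0 < z <;> simp [h1, h2]

lemma core (sx sy sz : Bool → Fin 3) :
    ∃! q : Bool × Bool × Bool,
      q.1 = (decide (sy q.2.1 = 0) && decide (sz q.2.2 = 2)) ∧
      q.2.1 = (decide (sz q.2.2 = 0) && decide (sx q.1 = 2)) ∧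
      q.2.2 = (decide (sx q.1 = 0) && decide (sy q.2.1 = 2)) := by
  unfold ExistsUnique; revert sx sy sz; decide

/-- The reversible extension of the Heaviside process is itself a process function:
for all local operations `f_R, f_S, f_T : ℝ → ℝ` and every source preparation
`(e₀,e₁,e₂) ∈ ℝ³` there is a unique triple `(x,y,z) ∈ ℝ³` with
`x = f_R(Θ(−y)Θ(z)+e₀)`, `y = f_S(Θ(−z)Θ(x)+e₁)`, `z = f_T(Θ(−x)Θ(y)+e₂)`. -/
theorem heaviside_extension_process (fR fS fT : ℝ → ℝ) (e₀ e₁ e₂ : ℝ) :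
    ∃! p : ℝ × ℝ × ℝ,
      p.1 = fR (Θ (-p.2.1) * Θ p.2.2 + e₀) ∧
      p.2.1 = fS (Θ (-p.2.2) * Θ p.1 + e₁) ∧
      p.2.2 = fT (Θ (-p.1) * Θ p.2.1 + e₂) := by
  set A : Bool → ℝ := fun b => fR (toB b + e₀) with hA
  set B : Bool → ℝ := fun b => fS (toB b + e₁) with hB
  set C : Bool → ℝ := fun b => fT (toB b + e₂) with hC
  obtain ⟨q, ⟨hq1, hq2, hq3⟩, huniq⟩ :=
    core (fun b => mysign (A b)) (fun b => mysign (B b)) (fun b => mysign (C b))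
  refine ⟨(A q.1, B q.2.1, C q.2.2), ⟨?_, ?_, ?_⟩, ?_⟩
  · show A q.1 = fR (Θ (-(B q.2.1)) * Θ (C q.2.2) + e₀)
    rw [theta_mul, ← mysign_eq_zero, ← mysign_eq_two, ← hq1]
  · show B q.2.1 = fS (Θ (-(C q.2.2)) * Θ (A q.1) + e₁)
    rw [theta_mul, ← mysign_eq_zero, ← mysign_eq_two, ← hq2]
  · show C q.2.2 = fT (Θ (-(A q.1)) * Θ (B q.2.1) + e₂)
    rw [theta_mul, ← mysign_eq_zero, ← mysign_eq_two, ← hq3]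
  · rintro ⟨x, y, z⟩ ⟨h1, h2, h3⟩
    simp only at h1 h2 h3
    set q' : Bool × Bool × Bool :=
      ((decide (y < 0) && decide (0 < z)), (decide (z < 0) && decide (0 < x)),
        (decide (x < 0) && decide (0 < y))) with hq'
    have hx : x = A q'.1 := by rw [h1, theta_mul]
    have hy : y = B q'.2.1 := by rw [h2, theta_mul]
    have hz : z = C q'.2.2 := by rw [h3, theta_mul]
    have hsol : q' = q := by
      apply huniq
      refine ⟨?_, ?_, ?_⟩ <;>
        simp only [mysign_eq_zero, mysign_eq_two, ← hx, ← hy, ← hz] <;> rfl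
    have : q'.1 = q.1 := by rw [hsol]
    have h21 : q'.2.1 = q.2.1 := by rw [hsol]
    have h22 : q'.2.2 = q.2.2 := by rw [hsol]
    simp only [Prod.mk.injEq]
    exact ⟨by rw [hx, this], by rw [hy, h21], by rw [hz, h22]⟩
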